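/- Consider the reduction system E: p₁ = p₄ + 4096, p₆ = p₀ + p₂ + p₃ + p₅ + p₇, a₁ = p₇ + p₈, a₂ = a₁ + p₅ (all over ℕ). Then for all natural numbers a₂, p₀, p₂, p₃, p₄: (there exist a₁, p₁, p₅, p₆, p₇, p₈ ∈ ℕ satisfying E together with G₁ ≜ p₅ + p₆ ≤ p₈) if and only if p₀ + p₂ + p₃ ≤ a₂. -/
import Mathlib


/-- Running example `G₁ ≜ (p₅ + p₆ ≤ p₈)`: the projection of `E ∧ G₁` onto
`{a₂, p₀, p₂, p₃, p₄}` is exactly `G₂ ≜ (p₀ + p₂ + p₃ ≤ a₂)`. -/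
theorem stmt_14 (a₂ p₀ p₂ p₃ p₄ : ℕ) :
    (∃ a₁ p₁ p₅ p₆ p₇ p₈ : ℕ,
        p₁ = p₄ + 4096 ∧
        p₆ = p₀ + p₂ + p₃ + p₅ + p₇ ∧
        a₁ = p₇ + p₈ ∧
        a₂ = a₁ + p₅ ∧
        p₅ + p₆ ≤ p₈)
      ↔ p₀ + p₂ + p₃ ≤ a₂ := by
  constructor
  · rintro ⟨a₁, p₁, p₅, p₆, p₇, p₈, _, rfl, rfl, rfl, h⟩
    omega
  · intro h
    exact ⟨a₂, p₄ + 4096, 0, p₀ + p₂ + p₃, 0, a₂, rfl, by ring, by ring, by ring, by omega⟩
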